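/- In the extended model, for every fixed l ≥ 0 and every k ≥ 0, the l-failure Age-of-Information is bounded by α^{[l]}_k ≤ B' + N' − n + K + l·N'. -/
import Mathlib


/-- The `l`-failure Age-of-Information sequence of the extended model. -/
def aoiExt (A' B' N' ΔB ΔN : ℤ) (l k : ℕ) : ℤ :=
  2 + (l : ℤ) * N' + ((k : ℤ) * A' - ΔN - 1) % N' +
    (((k : ℤ) * A' - ΔB - 2 - (l : ℤ) * N') % B' -
      ((k : ℤ) * A' - ΔN - 1) % N') % B'

/-- The constant `K = 2 + (Δ_N + 1) %̄ n` where `x %̄ m = ⌈x/m⌉·m − x`. -/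
def extK (ΔN n : ℕ) : ℤ :=
  2 + (⌈(((ΔN : ℚ) + 1)) / (n : ℚ)⌉ * n - ((ΔN : ℤ) + 1))

lemma extK_eq (ΔN n : ℕ) (hn : 0 < n) :
    extK ΔN n = 2 + (-(ΔN + 1 : ℤ)) % (n : ℤ) := by
  have h1 : ⌈(((ΔN : ℚ) + 1)) / (n : ℚ)⌉ = -((-(ΔN + 1 : ℤ)) / (n : ℤ)) := by
    rw [← neg_neg ⌈((ΔN : ℚ) + 1) / (n : ℚ)⌉, ← Int.floor_neg, ← neg_div]
    have : (-((ΔN : ℚ) + 1)) = ((-(ΔN + 1 : ℤ) : ℤ) : ℚ) := by push_cast; ring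
    rw [this, Rat.floor_intCast_div_natCast]
  rw [extK, h1]
  have := Int.emod_add_mul_ediv (-(ΔN + 1 : ℤ)) (n : ℤ)
  linarith [this]

/-- If `X = x % N'`, `n ∣ N'`, `x ≡ -(m) [ZMOD n]`, then `X ≤ N' - n + (-m) % n`. -/
lemma mod_le_of_dvd (x N' : ℤ) (n : ℕ) (hn : 0 < n) (hdvd : (n : ℤ) ∣ N')
    (hN' : 0 < N') :
    x % N' ≤ N' - n + x % (n : ℤ) := by
  set X := x % N' with hX
  have hXnn : 0 ≤ X := Int.emod_nonneg _ (by positivity)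
  have hXlt : X < N' := Int.emod_lt_of_pos _ hN'
  have hmod : X % (n : ℤ) = x % (n : ℤ) := Int.emod_emod_of_dvd _ hdvd
  have hnpos : (0 : ℤ) < n := by exact_mod_cast hn
  -- X = n * (X / n) + X % n
  have hdiv := Int.emod_add_mul_ediv X (n : ℤ)
  have hrlt : X % (n : ℤ) < n := Int.emod_lt_of_pos _ hnpos
  have hrnn : 0 ≤ X % (n : ℤ) := Int.emod_nonneg _ (by positivity)
  -- n * (X / n) ≤ N' - n  since n * (X/n) = X - X%n < N' and n ∣ N'
  obtain ⟨q, hq⟩ := hdvd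
  have h1 : (n : ℤ) * (X / n) < (n : ℤ) * q := by nlinarith
  have h2 : X / n < q := lt_of_mul_lt_mul_left h1 (le_of_lt hnpos)
  have h3 : (n : ℤ) * (X / n) ≤ (n : ℤ) * (q - 1) := by
    apply mul_le_mul_of_nonneg_left (by omega) (le_of_lt hnpos)
  have : X ≤ N' - n + X % (n : ℤ) := by
    have := hdiv
    nlinarith
  rwa [hmod] at this

/-- In the extended model, for every fixed `l` and every `k`, the `l`-failure
AoI is bounded by `B' + N' − n + K + l·N'`. -/
theorem stmt14 (A B N a b n : ℕ) (hA : 0 < A) (hB : 0 < B) (hN : 0 < N)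
    (hapos : 0 < a) (hbpos : 0 < b) (hnpos : 0 < n)
    (ha : a = Nat.gcd (B * a * b) (N * a * n))
    (hb : b = Nat.gcd (A * b * n) (B * a * b))
    (hn : n = Nat.gcd (A * b * n) (N * a * n))
    (ΔB ΔN : ℕ) (l : ℕ) :
    ∀ k : ℕ,
      aoiExt (A * b * n : ℤ) (B * a * b : ℤ) (N * a * n : ℤ) (ΔB : ℤ) (ΔN : ℤ) l k ≤
        (B : ℤ) * a * b + (N : ℤ) * a * n - n + extK ΔN n + (l : ℤ) * ((N : ℤ) * a * n) := by
  intro k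
  set A' : ℤ := (A : ℤ) * b * n with hA'
  set B' : ℤ := (B : ℤ) * a * b with hB'
  set N' : ℤ := (N : ℤ) * a * n with hN'
  have hB'pos : 0 < B' := by positivity
  have hN'pos : 0 < N' := by positivity
  have hdvdN' : (n : ℤ) ∣ N' := ⟨(N : ℤ) * a, by ring⟩
  have hdvdA' : (n : ℤ) ∣ A' := ⟨(A : ℤ) * b, by ring⟩
  set x : ℤ := (k : ℤ) * A' - ΔN - 1 with hx
  -- bound the second mod term by B' - 1
  have hY : (((k : ℤ) * A' - ΔB - 2 - (l : ℤ) * N') % B' - x % N') % B' ≤ B' - 1 := by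
    have := Int.emod_lt_of_pos (((k : ℤ) * A' - ΔB - 2 - (l : ℤ) * N') % B' - x % N') hB'pos
    omega
  -- x ≡ -(ΔN+1) mod n
  have hxmod : x % (n : ℤ) = (-(ΔN + 1 : ℤ)) % (n : ℤ) := by
    obtain ⟨c, hc⟩ := Dvd.dvd.mul_left hdvdA' (k : ℤ)
    have hxe : x = -(ΔN + 1 : ℤ) + (n : ℤ) * c := by rw [hx, hc]; ring
    rw [hxe, Int.add_mul_emod_self_left]
  have hX : x % N' ≤ N' - n + (-(ΔN + 1 : ℤ)) % (n : ℤ) := by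
    have := mod_le_of_dvd x N' n hnpos hdvdN' hN'pos
    rwa [hxmod] at this
  rw [extK_eq ΔN n hnpos]
  unfold aoiExt
  push_cast
  nlinarith [hX, hY]
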